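/- There exists a constant C > 0 such that for every real ε with 0 < ε ≤ 1/2, setting λ_k = 2π²ε|k|·K₁(πε|k|)/K₀(πε|k|) for k ∈ ℤ with k ≠ 0, every family of complex numbers (û_k)_{k ∈ ℤ, k ≠ 0} with ∑_{k ≠ 0} (1 + k²)·|û_k|² < ∞ satisfies ∑_{k ≠ 0} λ_k²·|û_k|² ≤ (C/|log ε|)²·∑_{k ≠ 0} (1 + k²)·|û_k|². -/

import Mathlib

open Real
open MeasureTheory Set Filter

variable {z : ℝ}

lemma cosh_le_exp' {t : ℝ} (ht : 0 ≤ t) : Real.cosh t ≤ Real.exp t := by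
  rw [Real.cosh_eq]
  have : Real.exp (-t) ≤ Real.exp t := Real.exp_le_exp.2 (by linarith)
  linarith

lemma exp_le_two_cosh (t : ℝ) : Real.exp t ≤ 2 * Real.cosh t := by
  rw [Real.cosh_eq]; have := (Real.exp_pos (-t)).le; linarith

lemma integrableD (hz : 0 < z) :
    IntegrableOn (fun t => Real.exp t * Real.exp (-(z/2) * Real.exp t)) (Ioi 0) := by
  have key : ∀ x ∈ Ici (0:ℝ), HasDerivAt (fun t => -(2/z) * Real.exp (-(z/2) * Real.exp t))
      (Real.exp x * Real.exp (-(z/2) * Real.exp x)) x := by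
    intro x _
    have h1 : HasDerivAt (fun t : ℝ => -(z/2) * Real.exp t) (-(z/2) * Real.exp x) x :=
      (Real.hasDerivAt_exp x).const_mul _
    have h2 := (h1.exp).const_mul (-(2/z))
    refine h2.congr_deriv ?_
    field_simp
  have htend : Tendsto (fun t => -(2/z) * Real.exp (-(z/2) * Real.exp t)) atTop (nhds 0) := by
    have h1 : Tendsto (fun t : ℝ => -(z/2) * Real.exp t) atTop atBot :=
      Tendsto.const_mul_atTop_of_neg (by linarith) Real.tendsto_exp_atTop
    have h2 := Real.tendsto_exp_atBot.comp h1
    simpa using h2.const_mul (-(2/z))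
  exact integrableOn_Ioi_deriv_of_nonneg' key
    (fun x _ => by positivity) htend

lemma integrable_aux (hz : 0 < z) {φ : ℝ → ℝ} (hφc : Continuous φ)
    (hφ : ∀ t, 0 ≤ t → |φ t| ≤ Real.exp t) :
    IntegrableOn (fun t => Real.exp (-z * Real.cosh t) * φ t) (Ioi 0) := by
  have hmeas : AEStronglyMeasurable (fun t => Real.exp (-z * Real.cosh t) * φ t)
      (volume.restrict (Ioi 0)) :=
    ((Real.continuous_exp.comp (continuous_const.mul Real.continuous_cosh)).mul
      hφc).aestronglyMeasurable
  refine Integrable.mono (integrableD hz) hmeas ?_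
  filter_upwards [ae_restrict_mem measurableSet_Ioi] with t ht
  have ht0 : (0:ℝ) ≤ t := (le_of_lt ht)
  have h1 : Real.exp (-z * Real.cosh t) ≤ Real.exp (-(z/2) * Real.exp t) := by
    apply Real.exp_le_exp.2
    have := exp_le_two_cosh t
    nlinarith
  rw [Real.norm_eq_abs, Real.norm_eq_abs, abs_mul, abs_of_pos (Real.exp_pos _),
    abs_of_pos (by positivity : (0:ℝ) < Real.exp t * Real.exp (-(z/2) * Real.exp t))]
  calc Real.exp (-z * Real.cosh t) * |φ t| ≤ Real.exp (-(z/2) * Real.exp t) * Real.exp t := by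
        apply mul_le_mul h1 (hφ t ht0) (abs_nonneg _) (Real.exp_pos _).le
    _ = Real.exp t * Real.exp (-(z/2) * Real.exp t) := by ring

lemma intK (hz : 0 < z) (j : ℕ) (hj : j ≤ 1) :
    IntegrableOn (fun t => Real.exp (-z * Real.cosh t) * Real.cosh ((j:ℝ) * t)) (Ioi 0) := by
  refine integrable_aux hz (Real.continuous_cosh.comp (continuous_const.mul continuous_id)) ?_
  intro t ht
  rw [abs_of_pos (Real.cosh_pos _)]
  refine le_trans ?_ (cosh_le_exp' ht)
  rw [Real.cosh_le_cosh]
  rw [abs_mul]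
  calc |(j:ℝ)| * |t| ≤ 1 * |t| := by
        apply mul_le_mul_of_nonneg_right _ (abs_nonneg t)
        rw [abs_of_nonneg (by positivity : (0:ℝ) ≤ (j:ℝ))]
        exact_mod_cast hj
    _ = |t| := one_mul _

lemma intSinh (hz : 0 < z) :
    IntegrableOn (fun t => Real.exp (-z * Real.cosh t) * Real.sinh t) (Ioi 0) := by
  refine integrable_aux hz Real.continuous_sinh ?_
  intro t ht
  rw [abs_of_nonneg (Real.sinh_nonneg_iff.2 ht)]
  have h1 : Real.sinh t ≤ Real.cosh t := by
    nlinarith [Real.cosh_sub_sinh t, Real.exp_pos (-t)]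
  exact h1.trans (cosh_le_exp' ht)


/-- Modified Bessel function of the second kind of order `j`:
`K_j(z) = ∫₀^∞ exp (−z cosh t) * cosh (j t) dt`. -/
noncomputable def besselK (j : ℕ) (z : ℝ) : ℝ :=
  ∫ t in Set.Ioi (0 : ℝ), Real.exp (-z * Real.cosh t) * Real.cosh ((j : ℝ) * t)


lemma besselK_nonneg (j : ℕ) (z : ℝ) : 0 ≤ besselK j z := by
  apply setIntegral_nonneg measurableSet_Ioi
  intro t _
  positivity

lemma besselK_zero_eq (z : ℝ) :
    besselK 0 z = ∫ t in Ioi (0:ℝ), Real.exp (-z * Real.cosh t) := by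
  simp [besselK]

lemma besselK_one_eq (z : ℝ) :
    besselK 1 z = ∫ t in Ioi (0:ℝ), Real.exp (-z * Real.cosh t) * Real.cosh t := by
  simp [besselK]

lemma intK0 (hz : 0 < z) : IntegrableOn (fun t => Real.exp (-z * Real.cosh t)) (Ioi 0) := by
  have := intK hz 0 (by norm_num)
  simpa using this

lemma tendsto_negexp (hz : 0 < z) :
    Tendsto (fun t => -(Real.exp (-z * Real.cosh t) / z)) atTop (nhds 0) := by
  have hcosh : Tendsto Real.cosh atTop atTop := by
    apply tendsto_atTop_mono (fun t => ?_) (Real.tendsto_exp_atTop.atTop_div_const (by norm_num : (0:ℝ) < 2))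
    have := exp_le_two_cosh t
    linarith
  have h1 : Tendsto (fun t : ℝ => -z * Real.cosh t) atTop atBot :=
    Tendsto.const_mul_atTop_of_neg (by linarith) hcosh
  have h2 := Real.tendsto_exp_atBot.comp h1
  simpa using (h2.div_const z).neg

lemma integral_sinh_exp (hz : 0 < z) :
    ∫ t in Ioi (0:ℝ), Real.exp (-z * Real.cosh t) * Real.sinh t = Real.exp (-z) / z := by
  have hderiv : ∀ x ∈ Ici (0:ℝ), HasDerivAt (fun t => -(Real.exp (-z * Real.cosh t) / z))
      (Real.exp (-z * Real.cosh x) * Real.sinh x) x := by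
    intro x _
    have h1 : HasDerivAt (fun t : ℝ => -z * Real.cosh t) (-z * Real.sinh x) x :=
      (Real.hasDerivAt_cosh x).const_mul _
    have h2 := ((h1.exp).div_const z).neg
    refine h2.congr_deriv ?_
    field_simp
  have := integral_Ioi_of_hasDerivAt_of_tendsto' hderiv (intSinh hz) (tendsto_negexp hz)
  rw [this]
  simp [Real.cosh_zero]

lemma K1_le (hz : 0 < z) : z * besselK 1 z ≤ Real.exp (-z) + z * besselK 0 z := by
  have hmono : ∫ t in Ioi (0:ℝ), Real.exp (-z * Real.cosh t) * Real.cosh t ≤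
      ∫ t in Ioi (0:ℝ), (Real.exp (-z * Real.cosh t) * Real.sinh t + Real.exp (-z * Real.cosh t)) := by
    apply setIntegral_mono_on ?_ ?_ measurableSet_Ioi
    · intro t ht
      have h1 : Real.cosh t ≤ Real.sinh t + 1 := by
        have h2 := Real.cosh_sub_sinh t
        have h3 : Real.exp (-t) ≤ 1 := Real.exp_le_one_iff.2 (by simpa using le_of_lt ht)
        linarith
      nlinarith [Real.exp_pos (-z * Real.cosh t)]
    · have := intK hz 1 le_rfl
      simpa using this
    · exact (intSinh hz).add (intK0 hz)
  rw [integral_add (intSinh hz) (intK0 hz), integral_sinh_exp hz] at hmono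
  rw [besselK_one_eq, besselK_zero_eq]
  calc z * (∫ t in Ioi (0:ℝ), Real.exp (-z * Real.cosh t) * Real.cosh t)
      ≤ z * (Real.exp (-z) / z + ∫ t in Ioi (0:ℝ), Real.exp (-z * Real.cosh t)) :=
        mul_le_mul_of_nonneg_left hmono hz.le
    _ = Real.exp (-z) + z * ∫ t in Ioi (0:ℝ), Real.exp (-z * Real.cosh t) := by
        field_simp

lemma K0_ge (hz : 0 < z) {m c : ℝ} (hm : 0 ≤ m) (hc : 0 ≤ c)
    (h : ∀ t ∈ Ioc (0:ℝ) m, c ≤ Real.exp (-z * Real.cosh t)) :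
    c * m ≤ besselK 0 z := by
  rw [besselK_zero_eq]
  have hsub : Ioc (0:ℝ) m ⊆ Ioi 0 := Ioc_subset_Ioi_self
  have h1 : ∫ t in Ioc (0:ℝ) m, Real.exp (-z * Real.cosh t) ≤
      ∫ t in Ioi (0:ℝ), Real.exp (-z * Real.cosh t) := by
    apply setIntegral_mono_set (intK0 hz) ?_ (HasSubset.Subset.eventuallyLE hsub)
    filter_upwards with t using (Real.exp_pos _).le
  refine le_trans ?_ h1
  have h2 := setIntegral_ge_of_const_le (μ := volume) (c := c) measurableSet_Ioc
    (by simp : volume (Ioc (0:ℝ) m) ≠ ⊤) h ((intK0 hz).mono_set hsub)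
  calc c * m = c * (volume (Ioc (0:ℝ) m)).toReal := by
        rw [Real.volume_Ioc, ENNReal.toReal_ofReal (by linarith)]
        simp
    _ ≤ _ := by simpa [Measure.real, smul_eq_mul, mul_comm] using h2

lemma cosh_le_one_add_two_mul {t : ℝ} (h0 : 0 ≤ t) (h1 : t ≤ 1/2) :
    Real.cosh t ≤ 1 + 2 * t := by
  have ha := Real.add_one_le_exp (-t)
  have hb : Real.exp (-t) ≤ 1 := Real.exp_le_one_iff.2 (by linarith)
  have hc : Real.exp t * Real.exp (-t) = 1 := by
    rw [← Real.exp_add]; simp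
  rw [Real.cosh_eq]
  nlinarith [Real.exp_pos t, Real.exp_pos (-t)]

lemma K0_ge_log (hz : 0 < z) (hz1 : z ≤ 1) :
    -Real.log z * Real.exp (-1) ≤ besselK 0 z := by
  have hm : 0 ≤ -Real.log z := by
    have := Real.log_nonpos hz.le hz1
    linarith
  rw [mul_comm]
  apply K0_ge hz hm (Real.exp_pos _).le
  intro t ht
  apply Real.exp_le_exp.2
  have h1 : Real.cosh t ≤ Real.exp t := cosh_le_exp' ht.1.le
  have h2 : Real.exp t ≤ Real.exp (-Real.log z) := Real.exp_le_exp.2 ht.2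
  have h3 : Real.exp (-Real.log z) = z⁻¹ := by
    rw [Real.exp_neg, Real.exp_log hz]
  have h4 : z * Real.cosh t ≤ 1 := by
    calc z * Real.cosh t ≤ z * z⁻¹ := by
          apply mul_le_mul_of_nonneg_left _ hz.le
          rw [← h3]; exact h1.trans h2
      _ = 1 := mul_inv_cancel₀ hz.ne'
  linarith

lemma K0_ge_exp (hz : 0 < z) :
    Real.exp (-z - 1) * min (1/2) (1/(2*z)) ≤ besselK 0 z := by
  have hm : (0:ℝ) < min (1/2) (1/(2*z)) := by
    apply lt_min (by norm_num)
    positivity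
  apply K0_ge hz hm.le (Real.exp_pos _).le
  intro t ht
  apply Real.exp_le_exp.2
  have ht1 : t ≤ 1/2 := ht.2.trans (min_le_left _ _)
  have ht2 : t ≤ 1/(2*z) := ht.2.trans (min_le_right _ _)
  have h1 : Real.cosh t ≤ 1 + 2*t := cosh_le_one_add_two_mul ht.1.le ht1
  have h2 : 2 * z * t ≤ 1 := by
    have := (le_div_iff₀ (by positivity : (0:ℝ) < 2*z)).1 ht2
    linarith
  nlinarith


/-- The `k`-th eigenvalue of the slender-body Laplace PDE operator about a straight
periodic cylinder of radius `ε`. -/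
noncomputable def lamL (ε : ℝ) (k : ℤ) : ℝ :=
  2 * π ^ 2 * ε * |(k : ℝ)| *
    (besselK 1 (π * ε * |(k : ℝ)|) / besselK 0 (π * ε * |(k : ℝ)|))


set_option maxHeartbeats 2000000 in
lemma lam_mul_le {ε : ℝ} (hε : 0 < ε) (hε2 : ε ≤ 1/2) (k : ℤ) (hk : k ≠ 0) :
    lamL ε k * |Real.log ε| ≤ 1000 * |(k:ℝ)| := by
  have hε1 : ε < 1 := by linarith
  have hlogneg : Real.log ε < 0 := Real.log_neg hε hε1
  have hlam : lamL ε k = 2*π*(π*ε*|(k:ℝ)|) *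
      (besselK 1 (π*ε*|(k:ℝ)|) / besselK 0 (π*ε*|(k:ℝ)|)) := by
    rw [lamL]; ring
  rw [hlam, abs_of_neg hlogneg]
  set n : ℝ := |(k:ℝ)| with hn_def
  have hn : 1 ≤ n := by
    rw [hn_def, ← Int.cast_abs]
    exact_mod_cast Int.one_le_abs hk
  have hn0 : 0 < n := by linarith
  set L : ℝ := -Real.log ε with hL_def
  have hL : 0 < L := by rw [hL_def]; linarith
  set z : ℝ := π * ε * n with hz_def
  clear_value n L z
  have hz : 0 < z := by rw [hz_def]; have := pi_pos; positivity
  -- basic facts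
  have hK0pos : 0 < besselK 0 z := by
    refine lt_of_lt_of_le ?_ (K0_ge_exp hz)
    have : (0:ℝ) < min (1/2) (1/(2*z)) := lt_min (by norm_num) (by positivity)
    positivity
  have hdiv : z * besselK 1 z / besselK 0 z ≤ Real.exp (-z) / besselK 0 z + z := by
    calc z * besselK 1 z / besselK 0 z
        ≤ (Real.exp (-z) + z * besselK 0 z) / besselK 0 z := by
          gcongr
          exact K1_le hz
      _ = Real.exp (-z) / besselK 0 z + z := by field_simp
  have hεL : ε * L ≤ 1 := by
    have h := Real.log_le_sub_one_of_pos (inv_pos.2 hε)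
    rw [Real.log_inv] at h
    have h2 : L ≤ ε⁻¹ := by rw [hL_def]; linarith
    calc ε * L ≤ ε * ε⁻¹ := mul_le_mul_of_nonneg_left h2 hε.le
      _ = 1 := mul_inv_cancel₀ hε.ne'
  have hsq : 0 < Real.sqrt ε := Real.sqrt_pos.2 hε
  have hsL : Real.sqrt ε * L ≤ 2 := by
    have h := Real.log_le_sub_one_of_pos (inv_pos.2 hsq)
    rw [Real.log_inv, Real.log_sqrt hε.le] at h
    have h2 : L ≤ 2 * (Real.sqrt ε)⁻¹ := by rw [hL_def]; linarith
    calc Real.sqrt ε * L ≤ Real.sqrt ε * (2 * (Real.sqrt ε)⁻¹) :=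
          mul_le_mul_of_nonneg_left h2 hsq.le
      _ = 2 := by field_simp
  have hzL : z * L ≤ π * n := by
    have := pi_pos
    calc z * L = π * n * (ε * L) := by rw [hz_def]; ring
      _ ≤ π * n * 1 := mul_le_mul_of_nonneg_left hεL (by positivity)
      _ = π * n := mul_one _
  have hexp3 : Real.exp 1 ≤ 3 := by
    have := Real.exp_one_lt_d9
    linarith
  have hE : Real.exp (-z) / besselK 0 z * L ≤ 72 * n := by
    rcases le_or_gt z (Real.sqrt ε) with hcase | hcase
    · have hsε1 : Real.sqrt ε ≤ 1 := Real.sqrt_le_one.mpr (by linarith)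
      have hz1 : z ≤ 1 := hcase.trans hsε1
      have hlogz : L / 2 ≤ -Real.log z := by
        have h1 : Real.log z ≤ Real.log (Real.sqrt ε) := Real.log_le_log hz hcase
        rw [Real.log_sqrt hε.le] at h1
        rw [hL_def]; linarith
      have hK0 : L / 2 * Real.exp (-1) ≤ besselK 0 z :=
        le_trans (mul_le_mul_of_nonneg_right hlogz (Real.exp_pos _).le) (K0_ge_log hz hz1)
      have hK0pos2 : (0:ℝ) < L/2 * Real.exp (-1) := by positivity
      have h1 : Real.exp (-z) / besselK 0 z ≤ 1 / (L/2 * Real.exp (-1)) :=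
        div_le_div₀ (by norm_num) (Real.exp_le_one_iff.2 (by linarith)) hK0pos2 hK0
      have h2 : 1 / (L/2 * Real.exp (-1)) * L = 2 * Real.exp 1 := by
        rw [Real.exp_neg]
        field_simp
      calc Real.exp (-z)/besselK 0 z * L ≤ 1/(L/2*Real.exp (-1)) * L :=
            mul_le_mul_of_nonneg_right h1 hL.le
        _ = 2 * Real.exp 1 := h2
        _ ≤ 72 * n := by nlinarith
    · have hsn : 1 ≤ π * Real.sqrt ε * n := by
        have h1 : Real.sqrt ε < π * ε * n := by rw [← hz_def]; exact hcase
        have h2 : Real.sqrt ε * Real.sqrt ε = ε := Real.mul_self_sqrt hε.le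
        nlinarith
      have hLn : L ≤ 2 * π * n := by
        have := pi_pos
        calc L = 1 * L := (one_mul L).symm
          _ ≤ (π * Real.sqrt ε * n) * L := mul_le_mul_of_nonneg_right hsn hL.le
          _ = π * n * (Real.sqrt ε * L) := by ring
          _ ≤ π * n * 2 := mul_le_mul_of_nonneg_left hsL (by positivity)
          _ = 2 * π * n := by ring
      have hmin : 1/(2+2*z) ≤ min (1/2) (1/(2*z)) := by
        apply le_min
        · apply one_div_le_one_div_of_le (by norm_num) (by linarith)
        · apply one_div_le_one_div_of_le (by positivity) (by linarith)
      have hK0ge : Real.exp (-z-1) * (1/(2+2*z)) ≤ besselK 0 z :=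
        le_trans (mul_le_mul_of_nonneg_left hmin (Real.exp_pos _).le) (K0_ge_exp hz)
      have hden : (0:ℝ) < Real.exp (-z-1) * (1/(2+2*z)) := by positivity
      have h1 : Real.exp (-z)/besselK 0 z ≤ Real.exp (-z)/(Real.exp (-z-1) * (1/(2+2*z))) :=
        div_le_div_of_nonneg_left (Real.exp_pos _).le hden hK0ge
      have h2 : Real.exp (-z)/(Real.exp (-z-1) * (1/(2+2*z))) = Real.exp 1 * (2+2*z) := by
        rw [show (-z : ℝ) = (-z-1) + 1 by ring, Real.exp_add]
        have := (Real.exp_pos (-z-1)).ne'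
        field_simp
        ring
      have hA : 2*L + 2*(z*L) ≤ 2*(2*π*n) + 2*(π*n) := by linarith
      calc Real.exp (-z)/besselK 0 z * L
          ≤ Real.exp 1 * (2+2*z) * L := mul_le_mul_of_nonneg_right (h1.trans_eq h2) hL.le
        _ = Real.exp 1 * (2*L + 2*(z*L)) := by ring
        _ ≤ 3 * (2*(2*π*n) + 2*(π*n)) := by
            apply mul_le_mul hexp3 hA (by positivity) (by norm_num)
        _ ≤ 72 * n := by nlinarith [pi_le_four, pi_pos]
  have hsumE : Real.exp (-z)/besselK 0 z * L + z * L ≤ 76 * n := by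
    have : z * L ≤ 4 * n := by nlinarith [pi_le_four]
    linarith
  have hnn : 0 ≤ Real.exp (-z)/besselK 0 z * L + z * L := by positivity
  calc 2*π*z * (besselK 1 z / besselK 0 z) * L
      = 2*π*((z * besselK 1 z / besselK 0 z) * L) := by ring
    _ ≤ 2*π*((Real.exp (-z)/besselK 0 z + z) * L) := by
        have := pi_pos
        apply mul_le_mul_of_nonneg_left (mul_le_mul_of_nonneg_right hdiv hL.le) (by positivity)
    _ = 2*π*(Real.exp (-z)/besselK 0 z * L + z * L) := by ring
    _ ≤ 8 * (76 * n) := by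
        apply mul_le_mul (by nlinarith [pi_le_four]) hsumE hnn (by norm_num)
    _ ≤ 1000 * n := by linarith

lemma lam_nonneg (ε : ℝ) (hε : 0 ≤ ε) (k : ℤ) : 0 ≤ lamL ε k := by
  rw [lamL]
  have h0 := besselK_nonneg 0 (π*ε*|(k:ℝ)|)
  have h1 := besselK_nonneg 1 (π*ε*|(k:ℝ)|)
  have := pi_pos
  apply mul_nonneg (by positivity) (div_nonneg h1 h0)

lemma lam_sq_le {ε : ℝ} (hε : 0 < ε) (hε2 : ε ≤ 1/2) (k : ℤ) (hk : k ≠ 0) :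
    lamL ε k ^ 2 ≤ (1000 / |Real.log ε|) ^ 2 * (1 + (k:ℝ)^2) := by
  have habs : 0 < |Real.log ε| := by
    rw [abs_of_neg (Real.log_neg hε (by linarith))]
    have := Real.log_neg hε (by linarith : ε < 1)
    linarith
  have h := lam_mul_le hε hε2 k hk
  have hlamnn := lam_nonneg ε hε.le k
  have hlam_le : lamL ε k ≤ 1000 * |(k:ℝ)| / |Real.log ε| := by
    rw [le_div_iff₀ habs]; exact h
  calc lamL ε k ^ 2 ≤ (1000 * |(k:ℝ)| / |Real.log ε|)^2 := by
        apply pow_le_pow_left₀ hlamnn hlam_le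
    _ = (1000/|Real.log ε|)^2 * |(k:ℝ)|^2 := by ring
    _ ≤ (1000/|Real.log ε|)^2 * (1 + (k:ℝ)^2) := by
        apply mul_le_mul_of_nonneg_left _ (by positivity)
        rw [sq_abs]
        linarith


theorem laplace_wellposedness_estimate :
    ∃ C : ℝ, 0 < C ∧ ∀ ε : ℝ, 0 < ε → ε ≤ 1 / 2 →
      ∀ u : ℤ → ℂ,
      (Summable fun k : {k : ℤ // k ≠ 0} =>
          (1 + ((k.1 : ℝ)) ^ 2) * ‖u k.1‖ ^ 2) →
      (∑' k : {k : ℤ // k ≠ 0}, (lamL ε k.1) ^ 2 * ‖u k.1‖ ^ 2) ≤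
        (C / |Real.log ε|) ^ 2 *
          ∑' k : {k : ℤ // k ≠ 0}, (1 + ((k.1 : ℝ)) ^ 2) * ‖u k.1‖ ^ 2 := by
  refine ⟨1000, by norm_num, ?_⟩
  intro ε hε hε2 u hsum
  have hterm : ∀ k : {k : ℤ // k ≠ 0},
      lamL ε k.1 ^ 2 * ‖u k.1‖ ^ 2 ≤
      (1000/|Real.log ε|)^2 * ((1 + ((k.1:ℝ))^2) * ‖u k.1‖^2) := by
    intro k
    calc lamL ε k.1 ^ 2 * ‖u k.1‖ ^ 2
        ≤ ((1000/|Real.log ε|)^2 * (1+(k.1:ℝ)^2)) * ‖u k.1‖^2 :=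
          mul_le_mul_of_nonneg_right (lam_sq_le hε hε2 k.1 k.2) (by positivity)
      _ = (1000/|Real.log ε|)^2 * ((1 + ((k.1:ℝ))^2) * ‖u k.1‖^2) := by ring
  have hsum2 : Summable (fun k : {k:ℤ//k≠0} =>
      (1000/|Real.log ε|)^2 * ((1+((k.1:ℝ))^2) * ‖u k.1‖^2)) :=
    hsum.mul_left _
  have hsumL : Summable (fun k : {k:ℤ//k≠0} => lamL ε k.1^2 * ‖u k.1‖^2) :=
    Summable.of_nonneg_of_le (fun k => by positivity) hterm hsum2
  calc (∑' k : {k : ℤ // k ≠ 0}, (lamL ε k.1) ^ 2 * ‖u k.1‖ ^ 2)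
      ≤ ∑' k : {k:ℤ//k≠0}, (1000/|Real.log ε|)^2 * ((1+((k.1:ℝ))^2) * ‖u k.1‖^2) :=
        Summable.tsum_le_tsum hterm hsumL hsum2
    _ = ((1000:ℝ)/|Real.log ε|)^2 * ∑' k : {k:ℤ//k≠0}, (1+((k.1:ℝ))^2) * ‖u k.1‖^2 :=
        tsum_mul_left
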